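/- Let A be a symmetric positive semidefinite n×n real matrix whose nullspace is spanned by the all-ones vector 1, and let F be an n×m real matrix and T a positive definite diagonal m×m matrix such that F^T 1 ≠ 0. Then A + F T F^T is symmetric positive definite. -/

import Mathlib

open Matrix

/-- If `A` is symmetric positive semidefinite with nullspace spanned by the
all-ones vector, `T` is a positive-definite diagonal matrix, and `Fᵀ 𝟙 ≠ 0`,
then `A + F T Fᵀ` is symmetric positive definite. -/
theorem stmt0 {n m : ℕ} (A : Matrix (Fin n) (Fin n) ℝ)
    (F : Matrix (Fin n) (Fin m) ℝ) (d : Fin m → ℝ)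
    (hA : A.PosSemidef)
    (hnull : ∀ x : Fin n → ℝ, A *ᵥ x = 0 ↔ ∃ c : ℝ, x = c • (fun _ => (1 : ℝ)))
    (hd : ∀ i, 0 < d i)
    (hF : Fᵀ *ᵥ (fun _ => (1 : ℝ)) ≠ 0) :
    (A + F * Matrix.diagonal d * Fᵀ).PosDef := by
  have hDsd : (Matrix.diagonal d).PosSemidef :=
    Matrix.posSemidef_diagonal_iff.mpr fun i => (hd i).le
  have hBsd : (F * Matrix.diagonal d * Fᵀ).PosSemidef := by
    have := hDsd.mul_mul_conjTranspose_same F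
    simpa [Matrix.conjTranspose_eq_transpose_of_trivial] using this
  rw [Matrix.posDef_iff_dotProduct_mulVec]
  constructor
  · exact (hA.isHermitian.add hBsd.isHermitian)
  · intro x hx
    have key : x ⬝ᵥ ((A + F * Matrix.diagonal d * Fᵀ) *ᵥ x)
        = x ⬝ᵥ (A *ᵥ x) + x ⬝ᵥ ((F * Matrix.diagonal d * Fᵀ) *ᵥ x) := by
      rw [Matrix.add_mulVec, dotProduct_add]
    have h1 : 0 ≤ x ⬝ᵥ (A *ᵥ x) := by simpa using hA.dotProduct_mulVec_nonneg x
    have h2 : 0 ≤ x ⬝ᵥ ((F * Matrix.diagonal d * Fᵀ) *ᵥ x) := by simpa using hBsd.dotProduct_mulVec_nonneg x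
    simp only [star_trivial]
    rw [key]
    rcases lt_or_eq_of_le h1 with h | h
    · linarith
    rcases lt_or_eq_of_le h2 with h' | h'
    · linarith
    exfalso
    -- both quadratic forms vanish
    have hAx : A *ᵥ x = 0 := by
      have := (hA.dotProduct_mulVec_zero_iff x).mp (by simpa using h.symm)
      simpa using this
    obtain ⟨c, rfl⟩ := (hnull x).mp hAx
    -- compute second quadratic form as sum
    set y := Fᵀ *ᵥ (c • fun _ => (1:ℝ)) with hy
    have hquad : (c • fun _ => (1:ℝ)) ⬝ᵥ ((F * Matrix.diagonal d * Fᵀ) *ᵥ (c • fun _ => (1:ℝ)))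
        = y ⬝ᵥ (Matrix.diagonal d *ᵥ y) := by
      rw [← Matrix.mulVec_mulVec, ← Matrix.mulVec_mulVec, Matrix.dotProduct_mulVec,
        ← Matrix.mulVec_transpose]
    have hyzero : y = 0 := by
      have hsum : ∑ i, d i * (y i)^2 = 0 := by
        have : y ⬝ᵥ (Matrix.diagonal d *ᵥ y) = ∑ i, d i * (y i)^2 := by
          simp [dotProduct, Matrix.mulVec_diagonal]
          ring_nf
          congr 1; funext i; ring
        rw [← this, ← hquad, ← h']
      have hnn : ∀ i ∈ Finset.univ, 0 ≤ d i * (y i)^2 :=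
        fun i _ => mul_nonneg (hd i).le (sq_nonneg _)
      funext i
      have := (Finset.sum_eq_zero_iff_of_nonneg hnn).mp hsum i (Finset.mem_univ i)
      have := (mul_eq_zero.mp this).resolve_left (ne_of_gt (hd i))
      simpa using pow_eq_zero_iff (n := 2) (by norm_num) |>.mp this
    have hc : c ≠ 0 := by
      intro hc0
      apply hx
      funext i; simp [hc0]
    apply hF
    have : y = c • (Fᵀ *ᵥ fun _ => (1:ℝ)) := by
      rw [hy, Matrix.mulVec_smul]
    rw [this] at hyzero
    exact (smul_eq_zero.mp hyzero).resolve_left hc
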